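/- arXiv:1006.5175 — 5 statements merged into one kernel-verified Lean document; each statement's English description precedes it below -/
import Mathlib

section
/- Let R be a strongly F-regular integral domain of characteristic p > 0. Then R is normal (integrally closed in its fraction field). -/
/-- A strongly F-regular integral domain of characteristic `p > 0` is normal
(integrally closed in its fraction field). -/
theorem stmt_11 (p : ℕ) [Fact p.Prime] (R : Type*) [CommRing R] [IsDomain R] [CharP R p]
    (hSFR : ∀ r : R, r ≠ 0 → ∃ (e : ℕ) (φ : R → R),
      (∀ x y, φ (x + y) = φ x + φ y) ∧ (∀ a x, φ (a ^ p ^ e * x) = a * φ x) ∧ φ r = 1) :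
    IsIntegrallyClosed R := by
  set K := FractionRing R
  rw [isIntegrallyClosed_iff K]
  intro x hx
  -- find a common denominator `c` for the algebra R[x]
  obtain ⟨s, hs⟩ := hx.fg_adjoin_singleton
  obtain ⟨c, hc⟩ := IsLocalization.exist_integer_multiples_of_finset (nonZeroDivisors R) s
  have hc0 : (c : R) ≠ 0 := nonZeroDivisors.coe_ne_zero c
  have key : ∀ y ∈ Submodule.span R (s : Set K), ∃ r : R, algebraMap R K r = (c : R) • y := by
    intro y hy
    induction hy using Submodule.span_induction with
    | mem z hz => exact hc z hz
    | zero => exact ⟨0, by simp⟩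
    | add z w _ _ hz hw =>
      obtain ⟨rz, hrz⟩ := hz; obtain ⟨rw, hrw⟩ := hw
      exact ⟨rz + rw, by rw [map_add, hrz, hrw, smul_add]⟩
    | smul a z _ hz =>
      obtain ⟨rz, hrz⟩ := hz
      exact ⟨a * rz, by rw [map_mul, hrz, smul_comm, Algebra.smul_def, Algebra.smul_def]⟩
  -- get φ from strong F-regularity applied to c
  obtain ⟨e, φ, hadd, hplin, hφc⟩ := hSFR (c : R) hc0
  -- x^(p^e) is in R[x], so c • x^(p^e) is integral
  have hxmem : x ^ p ^ e ∈ Submodule.span R (s : Set K) := by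
    rw [hs]
    exact Subalgebra.pow_mem _ (Algebra.self_mem_adjoin_singleton R x) _
  obtain ⟨r', hr'⟩ := key _ hxmem
  -- write x = a / d
  obtain ⟨a, d, hd, had⟩ := IsFractionRing.div_surjective (A := R) x
  have hd0 : d ≠ 0 := nonZeroDivisors.ne_zero hd
  have hdK : algebraMap R K d ≠ 0 := by
    simpa using (IsFractionRing.to_map_eq_zero_iff (K := K)).not.mpr hd0
  -- relation in R : d^(p^e) * r' = c * a^(p^e)
  have hrel : d ^ p ^ e * r' = (c : R) * a ^ p ^ e := by
    apply IsFractionRing.injective R K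
    rw [map_mul, map_mul, map_pow, map_pow, hr', Algebra.smul_def]
    rw [← had]
    rw [div_pow, mul_left_comm, mul_div_assoc', mul_div_cancel_left₀ _ (pow_ne_zero _ hdK)]
  -- apply φ
  have h1 : φ (d ^ p ^ e * r') = d * φ r' := hplin d r'
  have h2 : φ ((c : R) * a ^ p ^ e) = a := by
    rw [mul_comm, hplin, hφc, mul_one]
  have ha : a = d * φ r' := by rw [← h2, ← hrel, h1]
  refine ⟨φ r', ?_⟩
  rw [← had, ha, map_mul, mul_comm, mul_div_assoc, div_self hdK, mul_one]
end

section
/- Let f: X → Y be a morphism of schemes over a field of characteristic p > 0 such that the natural map O_Y → f_* O_X is an isomorphism. If X admits a Frobenius splitting, then Y admits a Frobenius splitting obtained by pushing forward. -/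
open AlgebraicGeometry CategoryTheory Opposite

/-- Let `f : X → Y` be a morphism of schemes over a field of characteristic
`p > 0` with `O_Y → f_* O_X` an isomorphism.  If `X` admits a Frobenius
splitting then so does `Y`, by pushing forward. -/
theorem stmt_13 (p : ℕ) [Fact p.Prime] (k : Type) [Field k] [CharP k p]
    (X Y : Scheme) (f : X ⟶ Y)
    (gX : X ⟶ Spec (CommRingCat.of k)) (gY : Y ⟶ Spec (CommRingCat.of k))
    (hcomm : gX = f ≫ gY)
    -- `O_Y → f_* O_X` is an isomorphism
    (happ : ∀ U : Y.Opens, Function.Bijective (f.app U))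
    -- a Frobenius splitting of `X`
    (sX : ∀ U : X.Opens, X.presheaf.obj (op U) → X.presheaf.obj (op U))
    (hadd : ∀ (U : X.Opens) (x y : X.presheaf.obj (op U)), sX U (x + y) = sX U x + sX U y)
    (hres : ∀ (U V : X.Opens) (h : V ≤ U) (x : X.presheaf.obj (op U)),
      X.presheaf.map (homOfLE h).op (sX U x) = sX V (X.presheaf.map (homOfLE h).op x))
    (hlin : ∀ (U : X.Opens) (a x : X.presheaf.obj (op U)), sX U (a ^ p * x) = a * sX U x)
    (hsplit : ∀ (U : X.Opens) (g : X.presheaf.obj (op U)), sX U (g ^ p) = g) :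
    -- then `Y` admits a Frobenius splitting
    ∃ sY : ∀ U : Y.Opens, Y.presheaf.obj (op U) → Y.presheaf.obj (op U),
      (∀ (U : Y.Opens) (x y : Y.presheaf.obj (op U)), sY U (x + y) = sY U x + sY U y) ∧
      (∀ (U V : Y.Opens) (h : V ≤ U) (x : Y.presheaf.obj (op U)),
        Y.presheaf.map (homOfLE h).op (sY U x) = sY V (Y.presheaf.map (homOfLE h).op x)) ∧
      (∀ (U : Y.Opens) (a x : Y.presheaf.obj (op U)), sY U (a ^ p * x) = a * sY U x) ∧
      (∀ (U : Y.Opens) (g : Y.presheaf.obj (op U)), sY U (g ^ p) = g) := by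
  classical
  let e : ∀ U : Y.Opens, Y.presheaf.obj (op U) ≃ X.presheaf.obj (op (f ⁻¹ᵁ U)) :=
    fun U => Equiv.ofBijective _ (happ U)
  have key : ∀ (U : Y.Opens) (z : X.presheaf.obj (op (f ⁻¹ᵁ U))),
      f.app U ((e U).symm z) = z := fun U z => (e U).apply_symm_apply z
  refine ⟨fun U y => (e U).symm (sX _ (f.app U y)), ?_, ?_, ?_, ?_⟩
  · intro U x y
    apply (happ U).injective
    show f.app U _ = f.app U _
    dsimp only
    rw [map_add, map_add, key, key, key, hadd]
  · intro U V h x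
    apply (happ V).injective
    show f.app V _ = f.app V _
    dsimp only
    rw [key]
    have hnat : ∀ z : Y.presheaf.obj (op U), f.app V (Y.presheaf.map (homOfLE h).op z)
        = X.presheaf.map (homOfLE (show f ⁻¹ᵁ V ≤ f ⁻¹ᵁ U from fun a ha => h ha)).op
            (f.app U z) := by
      intro z
      have h0 := f.naturality (homOfLE h).op
      have h1 := congrFun (congrArg (fun g => (ConcreteCategory.hom g :
        Y.presheaf.obj (op U) → X.presheaf.obj (op (f ⁻¹ᵁ V)))) h0) z
      simp only [CategoryTheory.comp_apply] at h1
      exact h1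
    rw [hnat, key, hres, ← hnat]
  · intro U a x
    apply (happ U).injective
    show f.app U _ = f.app U _
    dsimp only
    rw [key, map_mul, map_mul, map_pow, key, hlin]
  · intro U g
    apply (happ U).injective
    show f.app U _ = f.app U _
    dsimp only
    rw [key, map_pow, hsplit]
end

section
/- Let Z ⊆ X be a closed subscheme compatibly Frobenius split in X, with ideal sheaf I_Z, and suppose the splitting s: F_* O_X → O_X satisfies s(I_Z) ⊆ I_Z. If Z₁ is an irreducible component of Z (with its reduced structure), then s(I_{Z₁}) ⊆ I_{Z₁}, i.e. Z₁ is also compatibly split. -/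
/-- For a minimal prime `P` over `I` and `x ∈ P`, some multiple `c * x ^ n`
with `c ∉ P` lies in `I`. -/
lemma exists_mul_pow_mem_of_mem_minimalPrimes {R : Type*} [CommRing R]
    {I P : Ideal R} (hP : P ∈ I.minimalPrimes) {x : R} (hx : x ∈ P) :
    ∃ c ∉ P, ∃ n : ℕ, c * x ^ n ∈ I := by
  by_contra h
  push_neg at h
  have hPprime : P.IsPrime := hP.1.1
  -- the multiplicative set {c * x ^ n : c ∉ P}
  set S : Submonoid R :=
    { carrier := {y | ∃ c ∉ P, ∃ n : ℕ, y = c * x ^ n}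
      one_mem' := ⟨1, hPprime.1 ∘ fun h1 => (Ideal.eq_top_iff_one P).2 h1, 0, by ring⟩
      mul_mem' := by
        rintro a b ⟨c, hc, n, rfl⟩ ⟨d, hd, m, rfl⟩
        exact ⟨c * d, fun hcd => ((hPprime.mem_or_mem hcd).elim hc hd), n + m, by ring⟩ }
    with hS
  have hdisj : Disjoint (I : Set R) (S : Set R) := by
    rw [Set.disjoint_left]
    rintro y hyI ⟨c, hc, n, rfl⟩
    exact h c hc n hyI
  obtain ⟨Q, hQprime, hIQ, hQdisj⟩ := Ideal.exists_le_prime_disjoint I S hdisj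
  have hQP : Q ≤ P := by
    intro y hy
    by_contra hyP
    exact Set.disjoint_left.1 hQdisj hy ⟨y, hyP, 0, by ring⟩
  have hPQ : P ≤ Q := hP.2 ⟨hQprime, hIQ⟩ hQP
  exact Set.disjoint_left.1 hQdisj (hPQ hx)
    ⟨1, hP.1.1.1 ∘ fun h1 => (Ideal.eq_top_iff_one P).2 h1, 1, by ring⟩

/-- Affine version of Lemma 3.2(1): if an ideal `I` of a Frobenius split ring
`(R, s)` is compatibly split, then every minimal prime over `I` (corresponding
to an irreducible component of `V(I)`) is compatibly split. -/
theorem stmt_14 (p : ℕ) [Fact p.Prime] (R : Type*) [CommRing R] [CharP R p]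
    (s : R → R)
    (hadd : ∀ x y, s (x + y) = s x + s y)
    (hlin : ∀ r x, s (r ^ p * x) = r * s x)
    (hsplit : ∀ r, s (r ^ p) = r)
    (I : Ideal R) (hI : ∀ x ∈ I, s x ∈ I)
    (P : Ideal R) (hP : P ∈ I.minimalPrimes) :
    ∀ x ∈ P, s x ∈ P := by
  have hp1 : 1 ≤ p := (Fact.out : p.Prime).one_lt.le
  have hPprime : P.IsPrime := hP.1.1
  have hIP : I ≤ P := hP.1.2
  -- step 1: I is radical
  have hpmem : ∀ y : R, y ^ p ∈ I → y ∈ I := fun y hy => hsplit y ▸ hI _ hy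
  have hpk : ∀ (k : ℕ) (y : R), y ^ p ^ k ∈ I → y ∈ I := by
    intro k
    induction k with
    | zero => intro y hy; simpa using hy
    | succ k ih =>
      intro y hy
      refine ih y (hpmem _ ?_)
      rw [← pow_mul]
      rwa [pow_succ] at hy
  have hrad : ∀ (n : ℕ) (y : R), 1 ≤ n → y ^ n ∈ I → y ∈ I := by
    intro n y hn hy
    refine hpk n y ?_
    have hle : n ≤ p ^ n := Nat.le_of_lt (Nat.lt_pow_self (n := n) (Fact.out : p.Prime).one_lt)
    have : y ^ p ^ n = y ^ n * y ^ (p ^ n - n) := by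
      rw [← pow_add, Nat.add_sub_cancel' hle]
    rw [this]
    exact I.mul_mem_right _ hy
  -- step 2: main argument
  intro x hx
  obtain ⟨c, hc, n, hcx⟩ := exists_mul_pow_mem_of_mem_minimalPrimes hP hx
  have hn : 1 ≤ n := by
    rcases Nat.eq_zero_or_pos n with rfl | h
    · exact absurd (hIP (by simpa using hcx)) hc
    · exact h
  have hcxI : c * x ∈ I := by
    refine hrad n (c * x) hn ?_
    have : (c * x) ^ n = c ^ (n - 1) * (c * x ^ n) := by
      rw [mul_pow, ← mul_assoc, ← pow_succ, Nat.sub_add_cancel hn]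
    rw [this]
    exact I.mul_mem_left _ hcx
  have hcpx : c ^ p * x ∈ I := by
    have : c ^ p * x = c ^ (p - 1) * (c * x) := by
      rw [← mul_assoc, ← pow_succ, Nat.sub_add_cancel hp1]
    rw [this]
    exact I.mul_mem_left _ hcxI
  have : c * s x ∈ P := hIP (hlin c x ▸ hI _ hcpx)
  exact (hPprime.mem_or_mem this).resolve_left hc
end

section
/- Let G be a connected semisimple group over an algebraically closed field, H a closed subgroup, and suppose the restriction maps ∇(ω_i) → ∇^H(ω_i|_{T_H}) on dual Weyl modules are surjective for every fundamental weight ω_i, and that all multiplication (Cartan) maps ∇(μ) ⊗ ∇(ν) → ∇(μ+ν) and ∇^H(μ') ⊗ ∇^H(ν') → ∇^H(μ'+ν') between dual Weyl modules of dominant weights are surjective. Then for every dominant weight λ = Σ m_i ω_i, the restriction map ∇(λ) → ∇^H(λ|_{T_H}) is surjective. -/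
/-- Lemma 5.1 (abstract form): dominant weights are `λ = ∑ m_i ω_i`, encoded as
finitely supported functions `I →₀ ℕ`; `M λ` plays the role of `∇(λ)` and `N λ`
of `∇^H(λ|_{T_H})`, with restriction maps `res λ` and surjective multiplication
(Cartan) maps compatible with restriction.  If the restriction maps are
surjective for all fundamental weights `ω_i = single i 1` (and for `0`), then
they are surjective for every dominant weight. -/
theorem stmt_16 {k : Type*} [Field k] {I : Type*} [Fintype I] [DecidableEq I]
    (M N : (I →₀ ℕ) → Type*)
    [∀ lam, AddCommGroup (M lam)] [∀ lam, Module k (M lam)]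
    [∀ lam, AddCommGroup (N lam)] [∀ lam, Module k (N lam)]
    (res : ∀ lam, M lam →ₗ[k] N lam)
    (mulM : ∀ mu nu, M mu →ₗ[k] M nu →ₗ[k] M (mu + nu))
    (mulN : ∀ mu nu, N mu →ₗ[k] N nu →ₗ[k] N (mu + nu))
    -- surjectivity of the multiplication maps on tensor products (Ramanan–Ramanathan)
    (hMsurj : ∀ mu nu, Submodule.span k {z : M (mu + nu) | ∃ a b, mulM mu nu a b = z} = ⊤)
    (hNsurj : ∀ mu nu, Submodule.span k {z : N (mu + nu) | ∃ a b, mulN mu nu a b = z} = ⊤)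
    -- restriction is compatible with multiplication
    (hcompat : ∀ mu nu a b, res (mu + nu) (mulM mu nu a b) = mulN mu nu (res mu a) (res nu b))
    (hzero : Function.Surjective (res 0))
    -- surjectivity for the fundamental weights
    (hfund : ∀ i : I, Function.Surjective (res (Finsupp.single i 1))) :
    ∀ lam, Function.Surjective (res lam) := by
  have key : ∀ mu nu, Function.Surjective (res mu) → Function.Surjective (res nu) →
      Function.Surjective (res (mu + nu)) := by
    intro mu nu hmu hnu
    rw [← LinearMap.range_eq_top, ← top_le_iff, ← hNsurj mu nu, Submodule.span_le]
    rintro z ⟨a, b, rfl⟩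
    obtain ⟨a', rfl⟩ := hmu a
    obtain ⟨b', rfl⟩ := hnu b
    exact ⟨mulM mu nu a' b', hcompat mu nu a' b'⟩
  have hsingle : ∀ (i : I) (n : ℕ), Function.Surjective (res (Finsupp.single i n)) := by
    intro i n
    induction n with
    | zero => rw [Finsupp.single_zero]; exact hzero
    | succ n ih =>
      have h := key (Finsupp.single i n) (Finsupp.single i 1) ih (hfund i)
      rwa [← Finsupp.single_add] at h
  intro lam
  induction lam using Finsupp.induction with
  | zero => exact hzero
  | single_add a b f _ _ ih => exact key (Finsupp.single a b) f (hsingle a b) ih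
end

section
/- Let G be a semisimple group and H a closed reductive subgroup such that (G,H) is a Donkin pair: every G-module with a good filtration restricts to an H-module with a good filtration, where good filtrations have subquotients that are direct sums of dual Weyl modules ∇^H(ν). Then for every dominant weight λ of T, the H-equivariant restriction map ∇(λ) → ∇^H(λ|_{T_H}) is surjective. -/
/-- Lemma 5.3 (abstract form): `(G,H)` a Donkin pair implies the restriction map
`∇(λ) → ∇^H(λ|_{T_H})` is surjective.  Here `A` plays the role of the group
algebra of `H` (so `A`-modules are `H`-modules), `DH ν` are the dual Weyl
modules of `H` indexed by the poset `Λ` of weights, `M = res^G_H ∇(λ)` and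
`res : M → DH λ'` is the (nonzero) restriction map.  The Donkin-pair hypothesis
supplies a good filtration `0 = M₀ ⊂ ⋯ ⊂ Mₙ = M` with subquotients
`DH (ν i)`, `ν i ≤ λ'`; Frobenius reciprocity supplies the facts that a nonzero
map `DH ν₁ → DH ν₂` forces `ν₂ ≤ ν₁` and that nonzero endomorphisms of a dual
Weyl module are surjective. -/
theorem stmt_17 {A : Type*} [Ring A] {Λ : Type*} [PartialOrder Λ]
    (DH : Λ → Type*) [∀ ν, AddCommGroup (DH ν)] [∀ ν, Module A (DH ν)]
    (lam : Λ) (M : Type*) [AddCommGroup M] [Module A M]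
    (res : M →ₗ[A] DH lam) (hres : res ≠ 0)
    -- a good filtration of `M = res^G_H ∇(λ)`
    (n : ℕ) (Mfil : Fin (n + 1) → Submodule A M) (hmono : Monotone Mfil)
    (hbot : Mfil 0 = ⊥) (htop : Mfil (Fin.last n) = ⊤)
    (ν : Fin n → Λ) (hν : ∀ i, ν i ≤ lam)
    (φ : ∀ i : Fin n, ↥(Mfil i.succ) →ₗ[A] DH (ν i))
    (hφsurj : ∀ i, Function.Surjective (φ i))
    (hφker : ∀ i, LinearMap.ker (φ i) =
      Submodule.comap (Mfil i.succ).subtype (Mfil i.castSucc))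
    -- consequences of Frobenius reciprocity for dual Weyl modules
    (hhom : ∀ (ν₁ ν₂ : Λ) (f : DH ν₁ →ₗ[A] DH ν₂), f ≠ 0 → ν₂ ≤ ν₁)
    (hendo : ∀ (μ : Λ) (f : DH μ →ₗ[A] DH μ), f ≠ 0 → Function.Surjective f) :
    Function.Surjective res := by
  -- Find the first step of the filtration on which `res` is nonzero.
  have hg0 : ∀ x ∈ Mfil 0, res x = 0 := by
    intro x hx
    rw [hbot] at hx
    simp only [Submodule.mem_bot] at hx
    simp [hx]
  have hex : ∃ i : Fin n, (∀ x ∈ Mfil i.castSucc, res x = 0) ∧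
      ¬ (∀ x ∈ Mfil i.succ, res x = 0) := by
    by_contra hcon
    push_neg at hcon
    have hall : ∀ j : Fin (n+1), ∀ x ∈ Mfil j, res x = 0 := by
      intro j
      induction j using Fin.induction with
      | zero => exact hg0
      | succ i ih => exact hcon i ih
    exact hres (by ext x; exact hall (Fin.last n) x (by rw [htop]; trivial))
  obtain ⟨i, h0, h1⟩ := hex
  push_neg at h1
  set res' : ↥(Mfil i.succ) →ₗ[A] DH lam := res ∘ₗ (Mfil i.succ).subtype with hres'
  have hker : LinearMap.ker (φ i) ≤ LinearMap.ker res' := by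
    intro x hx
    rw [hφker i] at hx
    exact h0 x.1 hx
  let e := (φ i).quotKerEquivOfSurjective (hφsurj i)
  let f : DH (ν i) →ₗ[A] DH lam :=
    ((LinearMap.ker (φ i)).liftQ res' hker) ∘ₗ (e.symm : DH (ν i) →ₗ[A] _)
  have hcomm : ∀ x, f (φ i x) = res' x := by
    intro x
    have h2 : e.symm (φ i x) = Submodule.Quotient.mk x := by
      apply e.injective
      simp [e, LinearMap.quotKerEquivOfSurjective, LinearMap.quotKerEquivRange]
    simp [f, h2]
  obtain ⟨x, hx, hxne⟩ := h1
  have hfne : f ≠ 0 := by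
    intro hf
    apply hxne
    have := hcomm ⟨x, hx⟩
    rw [hf] at this
    simpa [res'] using this.symm
  have heq : ν i = lam := le_antisymm (hν i) (hhom _ _ f hfne)
  subst heq
  have hfs := hendo _ f hfne
  intro y
  obtain ⟨z, hz⟩ := hfs y
  obtain ⟨w, hw⟩ := hφsurj i z
  exact ⟨w.1, by rw [← hz, ← hw, hcomm]; rfl⟩
end
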